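/- Let k ≥ 1 be real and let G be a graph with unit edge lengths partitioned into clusters P₁,...,P_l with centers p_i ∈ P_i such that dist(p_i, u) ≤ k − 1 for all u ∈ P_i. Let C be the set of all edges with both endpoints in the same cluster. Then C is a (2k−1, 1)-contraction: for all vertices u, v, dist_{ℓ_C}(u,v) ≥ dist(u,v)/(2k−1) − 1. -/

import Mathlib

open Classical

noncomputable def walkLen {V : Type*} (G : SimpleGraph V) (ℓ : Sym2 V → ℝ)
    {u v : V} (w : G.Walk u v) : ℝ := (w.edges.map ℓ).sum

noncomputable def gdist {V : Type*} (G : SimpleGraph V) (ℓ : Sym2 V → ℝ) (u v : V) : ℝ :=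
  sInf {x : ℝ | ∃ w : G.Walk u v, walkLen G ℓ w = x}

noncomputable def zeroOn {V : Type*} (ℓ : Sym2 V → ℝ) (C : Set (Sym2 V)) : Sym2 V → ℝ :=
  fun e => if e ∈ C then 0 else ℓ e

section Aux

variable {V : Type*} (G : SimpleGraph V) (ℓ : Sym2 V → ℝ)

lemma walkLen_nonneg (hℓ : ∀ e, 0 ≤ ℓ e) {u v : V} (w : G.Walk u v) :
    0 ≤ walkLen G ℓ w := by
  unfold walkLen
  apply List.sum_nonneg
  intro x hx
  obtain ⟨e, _, rfl⟩ := List.mem_map.1 hx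
  exact hℓ e

lemma gdist_bddBelow (hℓ : ∀ e, 0 ≤ ℓ e) (u v : V) :
    BddBelow {x : ℝ | ∃ w : G.Walk u v, walkLen G ℓ w = x} :=
  ⟨0, fun x ⟨w, hw⟩ => hw ▸ walkLen_nonneg G ℓ hℓ w⟩

lemma gdist_le_walkLen (hℓ : ∀ e, 0 ≤ ℓ e) {u v : V} (w : G.Walk u v) :
    gdist G ℓ u v ≤ walkLen G ℓ w :=
  csInf_le (gdist_bddBelow G ℓ hℓ u v) ⟨w, rfl⟩

lemma gdist_nonempty (hconn : G.Connected) (u v : V) :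
    {x : ℝ | ∃ w : G.Walk u v, walkLen G ℓ w = x}.Nonempty := by
  obtain ⟨w⟩ := hconn.preconnected u v
  exact ⟨_, w, rfl⟩

lemma walkLen_append {u x v : V} (w1 : G.Walk u x) (w2 : G.Walk x v) :
    walkLen G ℓ (w1.append w2) = walkLen G ℓ w1 + walkLen G ℓ w2 := by
  unfold walkLen
  rw [SimpleGraph.Walk.edges_append, List.map_append, List.sum_append]

lemma gdist_triangle (hconn : G.Connected) (hℓ : ∀ e, 0 ≤ ℓ e) (u x v : V) :
    gdist G ℓ u v ≤ gdist G ℓ u x + gdist G ℓ x v := by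
  have key : gdist G ℓ u v - gdist G ℓ x v ≤ gdist G ℓ u x := by
    apply le_csInf (gdist_nonempty G ℓ hconn u x)
    rintro a ⟨w1, rfl⟩
    have h2 : gdist G ℓ u v - walkLen G ℓ w1 ≤ gdist G ℓ x v := by
      apply le_csInf (gdist_nonempty G ℓ hconn x v)
      rintro b ⟨w2, rfl⟩
      have h3 := gdist_le_walkLen G ℓ hℓ (w1.append w2)
      rw [walkLen_append] at h3
      linarith
    linarith
  linarith

lemma gdist_symm (u v : V) : gdist G ℓ u v = gdist G ℓ v u := by
  unfold gdist
  congr 1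
  ext x
  constructor <;> rintro ⟨w, rfl⟩ <;>
    exact ⟨w.reverse, by
      unfold walkLen
      rw [SimpleGraph.Walk.edges_reverse, List.map_reverse, List.sum_reverse]⟩

end Aux

theorem cluster_contraction {V : Type*} [Fintype V] (G : SimpleGraph V) (hconn : G.Connected)
    (k : ℝ) (hk : 1 ≤ k) (c : V → V) (hcc : ∀ u, c (c u) = c u)
    (hrad : ∀ u, gdist G (fun _ => (1 : ℝ)) (c u) u ≤ k - 1)
    (C : Set (Sym2 V))
    (hC : C = {e | e ∈ G.edgeSet ∧ ∃ x y : V, e = s(x, y) ∧ c x = c y}) :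
    ∀ u v : V, gdist G (fun _ => (1 : ℝ)) u v / (2 * k - 1) - 1 ≤
      gdist G (zeroOn (fun _ => (1 : ℝ)) C) u v := by
  intro u v
  set ℓ1 : Sym2 V → ℝ := fun _ => (1 : ℝ) with hℓ1
  set ℓ0 : Sym2 V → ℝ := zeroOn ℓ1 C with hℓ0
  have hnn1 : ∀ e, 0 ≤ ℓ1 e := fun _ => zero_le_one
  have hnn0 : ∀ e, 0 ≤ ℓ0 e := by
    intro e
    simp only [hℓ0, zeroOn]
    split <;> norm_num
  have hk2 : (0 : ℝ) < 2 * k - 1 := by linarith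
  -- weight-1 distance between adjacent vertices is ≤ 1
  have hadj : ∀ {a b : V}, G.Adj a b → gdist G ℓ1 a b ≤ 1 := by
    intro a b h
    have := gdist_le_walkLen G ℓ1 hnn1 h.toWalk
    simpa [walkLen, SimpleGraph.Adj.toWalk] using this
  -- key induction
  have key : ∀ (a b : V) (w : G.Walk a b),
      gdist G ℓ1 (c a) b ≤ (2 * k - 1) * walkLen G ℓ0 w + (k - 1) := by
    intro a b w
    induction w with
    | nil =>
      rename_i a'
      have := hrad a'
      simp only [walkLen, SimpleGraph.Walk.edges_nil, List.map_nil, List.sum_nil]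
      linarith
    | @cons a x b h p ih =>
      have hlen : walkLen G ℓ0 (SimpleGraph.Walk.cons h p)
          = ℓ0 s(a, x) + walkLen G ℓ0 p := by
        simp [walkLen, SimpleGraph.Walk.edges_cons]
      by_cases hmem : s(a, x) ∈ C
      · have hcax : c a = c x := by
          rw [hC] at hmem
          obtain ⟨_, x', y', heq, hcxy⟩ := hmem
          rw [Sym2.eq_iff] at heq
          rcases heq with ⟨rfl, rfl⟩ | ⟨rfl, rfl⟩
          · exact hcxy
          · exact hcxy.symm
        have hz : ℓ0 s(a, x) = 0 := by simp [hℓ0, zeroOn, hmem]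
        rw [hlen, hz, hcax]
        linarith
      · have hz : ℓ0 s(a, x) = 1 := by simp [hℓ0, zeroOn, hmem, hℓ1]
        have t1 := gdist_triangle G ℓ1 hconn hnn1 (c a) a b
        have t2 := gdist_triangle G ℓ1 hconn hnn1 a x b
        have t3 := gdist_triangle G ℓ1 hconn hnn1 x (c x) b
        have h1 := hrad a
        have h2 := hadj h
        have h3 : gdist G ℓ1 x (c x) ≤ k - 1 := by
          rw [gdist_symm]; exact hrad x
        rw [hlen, hz]
        linarith
  apply le_csInf (gdist_nonempty G ℓ0 hconn u v)
  rintro b ⟨w, rfl⟩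
  have h1 := key u v w
  have h2 := gdist_triangle G ℓ1 hconn hnn1 u (c u) v
  have h3 : gdist G ℓ1 u (c u) ≤ k - 1 := by
    rw [gdist_symm]; exact hrad u
  have h4 : gdist G ℓ1 u v ≤ (2 * k - 1) * walkLen G ℓ0 w + 2 * (k - 1) := by linarith
  rw [sub_le_iff_le_add, div_le_iff₀ hk2]
  nlinarith
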